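/- The iterative double auction terminates in finitely many rounds: since each buyer's bid price for each seller can strictly increase only finitely often (bounded by value) and each seller's ask price can strictly decrease only finitely often (bounded by cost), there exists a round after which all bids and asks are identical in two consecutive rounds, triggering termination condition T1. -/
import Mathlib

lemma eventually_const_of_steps (f : ℕ → ℝ) (δ u : ℝ) (hδ : 0 < δ)
    (hstep : ∀ t, f (t + 1) = f t ∨ f t + δ ≤ f (t + 1))
    (hub : ∀ t, f t ≤ u) :
    ∃ N, ∀ t, N ≤ t → f (t + 1) = f t := by
  by_contra h
  push_neg at h
  have hmono : Monotone f := by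
    apply monotone_nat_of_le_succ
    intro t
    rcases hstep t with h1 | h1
    · exact h1.ge
    · linarith
  have key : ∀ n : ℕ, ∃ t, f 0 + n * δ ≤ f t := by
    intro n
    induction n with
    | zero => exact ⟨0, by simp⟩
    | succ n ih =>
      obtain ⟨t, ht⟩ := ih
      obtain ⟨t', ht', hne⟩ := h t
      have hstep' : f t' + δ ≤ f (t' + 1) := by
        rcases hstep t' with h1 | h1
        · exact absurd h1 hne
        · exact h1
      have := hmono ht'
      refine ⟨t' + 1, ?_⟩
      push_cast
      linarith
  obtain ⟨n, hn⟩ := exists_nat_gt ((u - f 0) / δ)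
  obtain ⟨t, ht⟩ := key n
  have : (u - f 0) / δ * δ < n * δ := by
    apply mul_lt_mul_of_pos_right hn hδ
  rw [div_mul_cancel₀ _ (ne_of_gt hδ)] at this
  have := hub t
  linarith


/-- Termination of the iterative double auction: with finitely many buyers and
sellers, nondecreasing bid prices with strictly increasing steps of size at
least `δ` bounded above, and nonincreasing ask prices with strictly decreasing
steps of size at least `ε` bounded below, there exists a round after which all
bids and asks coincide in two consecutive rounds (termination condition T1). -/
theorem auction_terminates {B M : Type*} [Fintype B] [Fintype M]
    (bid : B → M → ℕ → ℝ) (ask : M → ℕ → ℝ) (δ ε : ℝ)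
    (hδ : 0 < δ) (hε : 0 < ε)
    (ub : B → M → ℝ) (lb : M → ℝ)
    (hbid_mono : ∀ b m, Monotone (bid b m))
    (hbid_step : ∀ b m t, bid b m (t + 1) = bid b m t ∨
      bid b m t + δ ≤ bid b m (t + 1))
    (hbid_ub : ∀ b m t, bid b m t ≤ ub b m)
    (hask_mono : ∀ m, Antitone (ask m))
    (hask_step : ∀ m t, ask m (t + 1) = ask m t ∨ ask m (t + 1) ≤ ask m t - ε)
    (hask_lb : ∀ m t, lb m ≤ ask m t) :
    ∃ T, (∀ b m, bid b m (T + 1) = bid b m T) ∧ (∀ m, ask m (T + 1) = ask m T) := by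
  have hb : ∀ b m, ∃ N, ∀ t, N ≤ t → bid b m (t + 1) = bid b m t := fun b m =>
    eventually_const_of_steps (bid b m) δ (ub b m) hδ (hbid_step b m) (hbid_ub b m)
  have ha : ∀ m, ∃ N, ∀ t, N ≤ t → ask m (t + 1) = ask m t := by
    intro m
    obtain ⟨N, hN⟩ := eventually_const_of_steps (fun t => -ask m t) ε (-lb m) hε
      (fun t => by rcases hask_step m t with h | h
                   · left; simp [h]
                   · right; simp; linarith)
      (fun t => by simp [hask_lb m t])
    exact ⟨N, fun t ht => neg_injective (hN t ht)⟩
  choose Nb hNb using hb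
  choose Na hNa using ha
  set T := max (Finset.univ.sup fun p : B × M => Nb p.1 p.2) (Finset.univ.sup Na) with hT
  refine ⟨T, fun b m => hNb b m T ?_, fun m => hNa m T ?_⟩
  · exact le_trans (Finset.le_sup (f := fun p : B × M => Nb p.1 p.2)
      (Finset.mem_univ (b, m))) (le_max_left _ _)
  · exact le_trans (Finset.le_sup (Finset.mem_univ m)) (le_max_right _ _)
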